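/- Let V : 𝒦ⁿ → ℝ be a translation invariant valuation on convex bodies which is positively homogeneous of degree m with m ∉ {0,1,…,n}. Then V vanishes on every axis-parallel box (with respect to any fixed basis of ℝⁿ). -/

import Mathlib

/-- A convex body in `ℝⁿ`: a nonempty compact convex set. -/
def IsConvexBody {n : ℕ} (K : Set (Fin n → ℝ)) : Prop :=
  K.Nonempty ∧ IsCompact K ∧ Convex ℝ K

namespace BoxVanishAux

open Function Set

variable {n : ℕ}

/-- The parallelotope spanned on `Icc a b` with respect to the basis `e`. -/
noncomputable def B (e : Module.Basis (Fin n) ℝ (Fin n → ℝ)) (a b : Fin n → ℝ) :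
    Set (Fin n → ℝ) :=
  ⇑e.equivFun.symm '' Set.Icc a b

lemma body (e : Module.Basis (Fin n) ℝ (Fin n → ℝ)) (a b : Fin n → ℝ) (h : a ≤ b) :
    IsConvexBody (B e a b) := by
  refine ⟨⟨e.equivFun.symm a, ⟨a, Set.mem_Icc.2 ⟨le_rfl, h⟩, rfl⟩⟩, ?_, ?_⟩
  · exact isCompact_Icc.image
      (LinearMap.continuous_of_finiteDimensional (e.equivFun.symm : (Fin n → ℝ) →ₗ[ℝ] (Fin n → ℝ)))
  · exact (convex_Icc a b).linear_image (e.equivFun.symm : (Fin n → ℝ) →ₗ[ℝ] (Fin n → ℝ))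

lemma trans_eq (e : Module.Basis (Fin n) ℝ (Fin n → ℝ)) (V : Set (Fin n → ℝ) → ℝ)
    (htrans : ∀ (K : Set (Fin n → ℝ)) (x : Fin n → ℝ),
      IsConvexBody K → V ((fun p => p + x) '' K) = V K)
    (a b : Fin n → ℝ) (h : a ≤ b) : V (B e a b) = V (B e 0 (b - a)) := by
  have h2 : (0 : Fin n → ℝ) ≤ b - a := by simpa using sub_nonneg.2 h
  have himg : (fun p => p + e.equivFun.symm a) '' B e 0 (b - a) = B e a b := by
    unfold B
    rw [Set.image_image]
    have hfun : (fun x => e.equivFun.symm x + e.equivFun.symm a)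
        = fun x => e.equivFun.symm (x + a) := by
      funext c; rw [map_add]
    have hIcc : Set.Icc a b = (fun c => c + a) '' Set.Icc 0 (b - a) := by
      rw [Set.image_add_const_Icc]; simp
    rw [hfun, hIcc, Set.image_image]
  rw [← himg, htrans _ _ (body e 0 _ h2)]

lemma Icc_union (t : Fin n → ℝ) (ht : 0 ≤ t) (i : Fin n) (s : ℝ) (hs0 : 0 ≤ s)
    (hst : s ≤ t i) :
    Set.Icc 0 (update t i s) ∪ Set.Icc (update 0 i s) t = Set.Icc (0 : Fin n → ℝ) t := by
  ext x
  simp only [Set.mem_union, Set.mem_Icc, Pi.le_def, Pi.zero_apply]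
  constructor
  · rintro (⟨h1, h2⟩ | ⟨h1, h2⟩)
    · refine ⟨h1, fun j => ?_⟩
      by_cases hj : j = i
      · subst hj; have := h2 j; rw [update_self] at this; exact this.trans hst
      · have := h2 j; rwa [update_of_ne hj] at this
    · refine ⟨fun j => ?_, h2⟩
      by_cases hj : j = i
      · subst hj; have := h1 j; rw [update_self] at this; exact hs0.trans this
      · have := h1 j; rwa [update_of_ne hj, Pi.zero_apply] at this
  · rintro ⟨h1, h2⟩
    rcases le_total (x i) s with h | h
    · left
      refine ⟨h1, fun j => ?_⟩
      by_cases hj : j = i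
      · subst hj; rw [update_self]; exact h
      · rw [update_of_ne hj]; exact h2 j
    · right
      refine ⟨fun j => ?_, h2⟩
      by_cases hj : j = i
      · subst hj; rw [update_self]; exact h
      · rw [update_of_ne hj, Pi.zero_apply]; exact h1 j

lemma step (e : Module.Basis (Fin n) ℝ (Fin n → ℝ)) (V : Set (Fin n → ℝ) → ℝ)
    (hval : ∀ K L : Set (Fin n → ℝ), IsConvexBody K → IsConvexBody L →
      IsConvexBody (K ∪ L) → V (K ∪ L) + V (K ∩ L) = V K + V L)
    (htrans : ∀ (K : Set (Fin n → ℝ)) (x : Fin n → ℝ),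
      IsConvexBody K → V ((fun p => p + x) '' K) = V K)
    (t : Fin n → ℝ) (ht : 0 ≤ t) (i : Fin n) :
    V (B e 0 t) + V (B e 0 (update t i 0)) = 2 * V (B e 0 (update t i (t i / 2))) := by
  set s : ℝ := t i / 2 with hs
  have hti : 0 ≤ t i := ht i
  have hs0 : 0 ≤ s := by positivity
  have hst : s ≤ t i := by rw [hs]; linarith
  have hle1 : (0 : Fin n → ℝ) ≤ update t i s := by
    intro j
    by_cases hj : j = i
    · subst hj; rw [update_self]; exact hs0
    · rw [update_of_ne hj]; exact ht j
  have hle2 : update (0 : Fin n → ℝ) i s ≤ t := by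
    intro j
    by_cases hj : j = i
    · subst hj; rw [update_self]; exact hst
    · rw [update_of_ne hj]; exact ht j
  have hle3 : update (0 : Fin n → ℝ) i s ≤ update t i s := by
    intro j
    by_cases hj : j = i
    · subst hj; rw [update_self, update_self]
    · rw [update_of_ne hj, update_of_ne hj]; exact ht j
  have hK : IsConvexBody (B e 0 (update t i s)) := body e _ _ hle1
  have hL : IsConvexBody (B e (update 0 i s) t) := body e _ _ hle2
  have hUnion : B e 0 (update t i s) ∪ B e (update 0 i s) t = B e 0 t := by
    unfold B
    rw [← Set.image_union, Icc_union t ht i s hs0 hst]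
  have hInter : B e 0 (update t i s) ∩ B e (update 0 i s) t
      = B e (update 0 i s) (update t i s) := by
    unfold B
    have hge0 : (0 : Fin n → ℝ) ≤ update (0 : Fin n → ℝ) i s := by
      intro j
      by_cases hj : j = i
      · subst hj; rw [update_self]; exact hs0
      · rw [update_of_ne hj]
    have hlef : update t i s ≤ t := by
      intro j
      by_cases hj : j = i
      · subst hj; rw [update_self]; exact hst
      · rw [update_of_ne hj]
    rw [← Set.image_inter e.equivFun.symm.injective, Set.Icc_inter_Icc,
      sup_of_le_right hge0, inf_of_le_left hlef]
  have hv := hval _ _ hK hL (hUnion ▸ body e 0 t ht)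
  rw [hUnion, hInter] at hv
  -- the second piece is a translate of the first
  have hsub1 : t - update (0 : Fin n → ℝ) i s = update t i s := by
    funext j
    by_cases hj : j = i
    · subst hj; simp [update_self, hs]; ring
    · simp [update_of_ne hj]
  have hVL : V (B e (update 0 i s) t) = V (B e 0 (update t i s)) := by
    rw [trans_eq e V htrans _ _ hle2, hsub1]
  -- the intersection is a translate of the degenerate box
  have hsub2 : update t i s - update (0 : Fin n → ℝ) i s = update t i 0 := by
    funext j
    by_cases hj : j = i
    · subst hj; simp [update_self]
    · simp [update_of_ne hj]
  have hVI : V (B e (update 0 i s) (update t i s)) = V (B e 0 (update t i 0)) := by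
    rw [trans_eq e V htrans _ _ hle3, hsub2]
  rw [hVL, hVI] at hv
  linarith

lemma smul_B (e : Module.Basis (Fin n) ℝ (Fin n → ℝ)) (t : Fin n → ℝ) (ht : 0 ≤ t) :
    (fun p => (2 : ℝ) • p) '' B e 0 t = B e 0 ((2 : ℝ) • t) := by
  have hIcc : (fun c : Fin n → ℝ => (2 : ℝ) • c) '' Set.Icc 0 t = Set.Icc 0 ((2 : ℝ) • t) := by
    ext x
    constructor
    · rintro ⟨y, hy, rfl⟩
      rw [Set.mem_Icc] at hy ⊢
      refine ⟨Pi.le_def.2 fun j => ?_, Pi.le_def.2 fun j => ?_⟩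
      · have := Pi.le_def.1 hy.1 j
        simp only [Pi.smul_apply, Pi.zero_apply, smul_eq_mul] at *
        linarith
      · have := Pi.le_def.1 hy.2 j
        simp only [Pi.smul_apply, smul_eq_mul] at *
        linarith
    · intro hx
      rw [Set.mem_Icc] at hx
      refine ⟨(2 : ℝ)⁻¹ • x, Set.mem_Icc.2 ⟨Pi.le_def.2 fun j => ?_, Pi.le_def.2 fun j => ?_⟩, ?_⟩
      · have := Pi.le_def.1 hx.1 j
        simp only [Pi.smul_apply, Pi.zero_apply, smul_eq_mul] at *
        linarith
      · have := Pi.le_def.1 hx.2 j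
        simp only [Pi.smul_apply, smul_eq_mul] at *
        linarith
      · funext j
        simp only [Pi.smul_apply, smul_eq_mul]
        ring
  unfold B
  rw [Set.image_image]
  have hfun : (fun c => (2 : ℝ) • e.equivFun.symm c)
      = fun c => e.equivFun.symm ((2 : ℝ) • c) := by
    funext c; rw [map_smul]
  rw [hfun, ← Set.image_image, hIcc]

lemma main (e : Module.Basis (Fin n) ℝ (Fin n → ℝ)) (V : Set (Fin n → ℝ) → ℝ)
    (hval : ∀ K L : Set (Fin n → ℝ), IsConvexBody K → IsConvexBody L →
      IsConvexBody (K ∪ L) → V (K ∪ L) + V (K ∩ L) = V K + V L)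
    (htrans : ∀ (K : Set (Fin n → ℝ)) (x : Fin n → ℝ),
      IsConvexBody K → V ((fun p => p + x) '' K) = V K)
    (m : ℝ)
    (hhom : ∀ l : ℝ, 0 < l → ∀ K : Set (Fin n → ℝ), IsConvexBody K →
      V ((fun p => l • p) '' K) = l ^ m * V K)
    (hm : ∀ k : ℕ, k ≤ n → m ≠ (k : ℝ)) :
    ∀ k : ℕ, ∀ t : Fin n → ℝ, 0 ≤ t →
      (Finset.univ.filter (fun i => t i ≠ 0)).card ≤ k → V (B e 0 t) = 0 := by
  have key : ∀ (t : Fin n → ℝ), 0 ≤ t →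
      (∀ t' : Fin n → ℝ, 0 ≤ t' →
        (Finset.univ.filter (fun i => t' i ≠ 0)).card
          < (Finset.univ.filter (fun i => t i ≠ 0)).card → V (B e 0 t') = 0) →
      V (B e 0 t) = 0 := by
    intro t ht IH
    set S : Finset (Fin n) := Finset.univ.filter (fun i => t i ≠ 0) with hS
    -- halve the box in every coordinate of a subset T of S
    have claim : ∀ T : Finset (Fin n), T ⊆ S →
        V (B e 0 t) = 2 ^ T.card * V (B e 0 (fun j => if j ∈ T then t j / 2 else t j)) := by
      intro T
      induction T using Finset.induction_on with
      | empty => intro _; simp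
      | @insert i T hi ihT =>
        intro hsub
        have hiS : i ∈ S := hsub (Finset.mem_insert_self i T)
        have h1 := ihT (fun j hj => hsub (Finset.mem_insert_of_mem hj))
        set t' : Fin n → ℝ := fun j => if j ∈ T then t j / 2 else t j with ht'def
        have ht' : 0 ≤ t' := by
          intro j
          have h0 := ht j
          simp only [Pi.zero_apply] at h0 ⊢
          simp only [ht'def]
          split <;> linarith
        have hstep := step e V hval htrans t' ht' i
        have hz : V (B e 0 (update t' i 0)) = 0 := by
          apply IH
          · intro j
            by_cases hj : j = i
            · subst hj; rw [update_self]; simp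
            · rw [update_of_ne hj]; exact ht' j
          · have hsubset : Finset.univ.filter (fun j => update t' i 0 j ≠ 0) ⊆ S.erase i := by
              intro j hj
              rw [Finset.mem_filter] at hj
              have hji : j ≠ i := by
                intro h
                subst h
                rw [update_self] at hj
                exact hj.2 rfl
              rw [update_of_ne hji] at hj
              refine Finset.mem_erase.2 ⟨hji, ?_⟩
              rw [hS, Finset.mem_filter]
              refine ⟨Finset.mem_univ j, ?_⟩
              intro h0
              apply hj.2
              simp only [ht'def]
              split <;> simp [h0]
            calc (Finset.univ.filter (fun j => update t' i 0 j ≠ 0)).card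
                ≤ (S.erase i).card := Finset.card_le_card hsubset
              _ < S.card := Finset.card_erase_lt_of_mem hiS
        have hupdate : update t' i (t' i / 2)
            = fun j => if j ∈ insert i T then t j / 2 else t j := by
          funext j
          by_cases hj : j = i
          · subst hj
            rw [update_self]
            simp only [ht'def, hi, if_neg hi, Finset.mem_insert_self, if_pos]
          · rw [update_of_ne hj]
            simp only [ht'def, Finset.mem_insert]
            by_cases hjT : j ∈ T <;> simp [hjT, hj]
        rw [hz, hupdate] at hstep
        have hstep' : V (B e 0 t')
            = 2 * V (B e 0 fun j => if j ∈ insert i T then t j / 2 else t j) := by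
          linarith
        rw [h1, Finset.card_insert_of_notMem hi, pow_succ, hstep']
        ring
    have hfin := claim S (le_refl S)
    have hhalf : (fun j => if j ∈ S then t j / 2 else t j) = fun j => t j / 2 := by
      funext j
      by_cases hj : j ∈ S
      · simp [hj]
      · have : t j = 0 := by
          by_contra h0
          exact hj (by rw [hS]; exact Finset.mem_filter.2 ⟨Finset.mem_univ j, h0⟩)
        simp [hj, this]
    rw [hhalf] at hfin
    set u : Fin n → ℝ := fun j => t j / 2 with hu
    have hu0 : 0 ≤ u := by
      intro j
      have h0 := ht j
      simp only [Pi.zero_apply] at h0 ⊢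
      simp only [hu]
      linarith
    have h2u : (2 : ℝ) • u = t := by
      funext j
      simp only [Pi.smul_apply, hu, smul_eq_mul]
      ring
    have hhomrel := hhom 2 (by norm_num) (B e 0 u) (body e 0 u hu0)
    rw [smul_B e u hu0, h2u] at hhomrel
    -- hhomrel : V (B e 0 t) = 2 ^ m * V (B e 0 u)
    have hScard : S.card ≤ n := by
      calc S.card ≤ (Finset.univ : Finset (Fin n)).card := Finset.card_le_card (Finset.filter_subset _ _)
        _ = n := by simp
    have hne : (2 : ℝ) ^ m ≠ 2 ^ S.card := by
      intro hEq
      have h1 : (2 : ℝ) ^ m = (2 : ℝ) ^ (S.card : ℝ) := by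
        rw [hEq, Real.rpow_natCast]
      have hm' : m = (S.card : ℝ) := by
        have hle : m ≤ (S.card : ℝ) :=
          (Real.rpow_le_rpow_left_iff (x := 2) one_lt_two).1 h1.le
        have hge : (S.card : ℝ) ≤ m :=
          (Real.rpow_le_rpow_left_iff (x := 2) one_lt_two).1 h1.ge
        linarith
      exact hm S.card hScard hm'
    have hzero : V (B e 0 u) = 0 := by
      by_contra h0
      apply hne
      have : ((2 : ℝ) ^ m - 2 ^ S.card) * V (B e 0 u) = 0 := by
        rw [sub_mul]
        rw [hfin] at hhomrel
        linarith
      rcases mul_eq_zero.1 this with h | h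
      · linarith [sub_eq_zero.1 h]
      · exact absurd h h0
    rw [hfin, hzero, mul_zero]
  intro k
  induction k with
  | zero =>
    intro t ht hcard
    apply key t ht
    intro t' _ hlt
    omega
  | succ k ih =>
    intro t ht hcard
    apply key t ht
    intro t' ht' hlt
    exact ih t' ht' (by omega)

end BoxVanishAux

/-- A translation invariant valuation on convex bodies in `ℝⁿ` which is positively
homogeneous of degree `m ∉ {0,1,…,n}` vanishes on every parallelotope with respect
to any basis of `ℝⁿ`. -/
theorem valuation_homogeneous_notNat_vanishes_on_boxes (n : ℕ)
    (V : Set (Fin n → ℝ) → ℝ)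
    (hval : ∀ K L : Set (Fin n → ℝ), IsConvexBody K → IsConvexBody L →
      IsConvexBody (K ∪ L) → V (K ∪ L) + V (K ∩ L) = V K + V L)
    (htrans : ∀ (K : Set (Fin n → ℝ)) (x : Fin n → ℝ),
      IsConvexBody K → V ((fun p => p + x) '' K) = V K)
    (m : ℝ)
    (hhom : ∀ l : ℝ, 0 < l → ∀ K : Set (Fin n → ℝ), IsConvexBody K →
      V ((fun p => l • p) '' K) = l ^ m * V K)
    (hm : ∀ k : ℕ, k ≤ n → m ≠ (k : ℝ)) :
    ∀ (e : Module.Basis (Fin n) ℝ (Fin n → ℝ)) (a b : Fin n → ℝ), a ≤ b →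
      V ((fun c : Fin n → ℝ => ∑ i, c i • e i) '' Set.Icc a b) = 0 := by
  intro e a b hab
  have himg : (fun c : Fin n → ℝ => ∑ i, c i • e i) '' Set.Icc a b = BoxVanishAux.B e a b := by
    unfold BoxVanishAux.B
    have hfun : (fun c : Fin n → ℝ => ∑ i, c i • e i) = ⇑e.equivFun.symm := by
      funext c
      rw [Module.Basis.equivFun_symm_apply]
    rw [hfun]
  rw [himg, BoxVanishAux.trans_eq e V htrans a b hab]
  have hba : (0 : Fin n → ℝ) ≤ b - a := by simpa using sub_nonneg.2 hab
  apply BoxVanishAux.main e V hval htrans m hhom hm n (b - a) hba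
  calc (Finset.univ.filter (fun i => (b - a) i ≠ 0)).card
      ≤ (Finset.univ : Finset (Fin n)).card := Finset.card_le_card (Finset.filter_subset _ _)
    _ = n := by simp
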